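/- Assume the standing hypotheses, let s = (x,y) ∈ S, let α, β ∈ ℕ₀ satisfy x = α·a + β·c with 0 ≤ α < c, and set δ = y − α·b − β·d (a nonnegative integer). Then β ≤ a·δ if and only if x·b ≤ y·a (i.e., ⌊β/a⌋ ≤ δ exactly when φ(s) ≤ φ(v) = a/b). -/
import Mathlib


/-- Standing hypotheses; s = (x,y) ∈ S, x = α·a + β·c with 0 ≤ α < c, and
δ = y − α·b − β·d a nonnegative integer.  Then β ≤ a·δ (i.e. ⌊β/a⌋ ≤ δ) if and
only if x·b ≤ y·a (i.e. φ(s) ≤ φ(v) = a/b). -/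
theorem embdim3_bound_comparison (a b c d : ℕ) (ha : 0 < a) (hb : 0 < b) (hc : 0 < c)
    (hstar : b * c = a * d + 1) (x y : ℕ)
    (hs : (x, y) ∈ AddSubmonoid.closure
        ({((0 : ℕ), (1 : ℕ)), (a, b), (c, d)} : Set (ℕ × ℕ)))
    (α β : ℕ) (hx : x = α * a + β * c) (hα : α < c)
    (δ : ℕ) (hδ : (δ : ℤ) = (y : ℤ) - α * b - β * d) :
    β ≤ a * δ ↔ x * b ≤ y * a := by
  have hst : (b:ℤ)*c = a*d+1 := by exact_mod_cast hstar
  subst hx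
  zify
  constructor <;> intro h <;> nlinarith [hδ, hst, h]
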